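/- Let p_1, …, p_n be n distinct prime numbers and let G be a solvable transitive subgroup of Sym(X), where X is a set with |X| = p_1⋯p_n. Then there exist a permutation τ ∈ Sym_n and normal subgroups {1} = K_0 ⊆ T_1 ⊆ K_1 ⊆ T_2 ⊆ K_2 ⊆ … ⊆ T_n ⊆ K_n = G of G such that for every i = 1, …, n: (i) K_i/K_{i−1} is isomorphic to a subgroup of the direct power (ℤ/(p_{τ(i)}) ⋊ Aut(ℤ/(p_{τ(i)})))^{(p_1⋯p_n)/(p_{τ(1)}⋯p_{τ(i)})}, the prime p_{τ(i)} divides |K_i/K_{i−1}|, and T_i/K_{i−1} is the Sylow p_{τ(i)}-subgroup of K_i/K_{i−1}; (ii) K_i = {g ∈ G : g(T_i(x)) = T_i(x) for all x ∈ X}, where T_i(x) = {t(x) : t ∈ T_i}; (iii) the family 𝒮_i = {K_i(x) : x ∈ X} of K_i-orbits is a system of imprimitivity for G and |𝒮_i| = (p_1⋯p_n)/(p_{τ(1)}⋯p_{τ(i)}). -/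

import Mathlib

open Equiv Pointwise

universe u v

/-- An involutive non-degenerate set-theoretic solution of the Yang–Baxter equation on `X`,
presented by its family of bijections `σ x` (`x ∈ X`), subject to the condition
`σ_x ∘ σ_{σ_x⁻¹(y)} = σ_y ∘ σ_{σ_y⁻¹(x)}`; the solution itself is recovered as
`r (x, y) = (σ x y, (σ (σ x y))⁻¹ x)`. -/
structure YBE (X : Type u) where
  σ : X → Equiv.Perm X
  ybe : ∀ x y : X, σ x * σ ((σ x)⁻¹ y) = σ y * σ ((σ y)⁻¹ x)

namespace YBE

variable {X : Type u} {Y : Type v}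

/-- The permutation group `𝒢(X,r)` of a solution. -/
def permGroup (S : YBE X) : Subgroup (Equiv.Perm X) :=
  Subgroup.closure (Set.range S.σ)

/-- `(X,r)` is indecomposable if `𝒢(X,r)` acts transitively on `X`. -/
def Indecomposable (S : YBE X) : Prop :=
  ∀ x y : X, ∃ g ∈ S.permGroup, g x = y

/-- Homomorphism of solutions. -/
def IsHom (S : YBE X) (T : YBE Y) (f : X → Y) : Prop :=
  ∀ x y : X, f (S.σ x y) = T.σ (f x) (f y)

/-- `T` is (a copy of) the retract `Ret(X,r)` of `S`: there is a surjective homomorphism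
of solutions identifying points with equal `σ`'s, and only those. -/
def IsRetract (S : YBE X) (T : YBE Y) : Prop :=
  ∃ f : X → Y, Function.Surjective f ∧ S.IsHom T f ∧
    ∀ x x' : X, f x = f x' ↔ S.σ x = S.σ x'

/-- `Retⁿ(X,r)` has cardinality one, i.e. the multipermutation level is at most `n`. -/
def MPLevelLE : ℕ → (X : Type u) → YBE X → Prop
  | 0, X, _ => Nonempty X ∧ Subsingleton X
  | n + 1, _, S => ∃ (Z : Type u) (T : YBE Z), S.IsRetract T ∧ MPLevelLE n Z T

/-- `(X,r)` is a multipermutation solution: `Retⁿ(X,r)` has cardinality one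
for some positive integer `n`. -/
def IsMultipermutation (S : YBE X) : Prop :=
  ∃ n : ℕ, 0 < n ∧ MPLevelLE n X S

/-- `m` is the multipermutation level of `(X,r)`: it is the least positive integer
with `|Retᵐ(X,r)| = 1`. -/
def MPLevelExact (S : YBE X) (m : ℕ) : Prop :=
  0 < m ∧ MPLevelLE m X S ∧ ∀ k : ℕ, 0 < k → MPLevelLE k X S → m ≤ k

/-- A simple solution: `|X| > 1` and every epimorphic image is either an isomorphic copy
or a singleton. -/
def IsSimple (S : YBE X) : Prop :=
  1 < Nat.card X ∧ ∀ (Z : Type u) (T : YBE Z) (f : X → Z),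
    S.IsHom T f → Function.Surjective f → (Function.Bijective f ∨ Nat.card Z = 1)

end YBE

/-- The orbit `H(x) = {t(x) : t ∈ H}` of `x ∈ X` under a subgroup `H` of a permutation
group `G ≤ Sym(X)`. -/
def orbIn {X : Type u} {G : Subgroup (Equiv.Perm X)} (H : Subgroup ↥G) (x : X) : Set X :=
  {y | ∃ t : ↥G, t ∈ H ∧ (t : Equiv.Perm X) x = y}

/-- The "orbit" `A(x) = {t(x) : t ∈ A}` of `x ∈ X` under a subset `A` of a permutation
group `G ≤ Sym(X)`. -/
def orbSet {X : Type u} {G : Subgroup (Equiv.Perm X)} (A : Set ↥G) (x : X) : Set X :=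
  {y | ∃ t ∈ A, ((t : Equiv.Perm X)) x = y}

/-- A left-brace structure on a group `G`: an abelian group operation `add` (whose neutral
element is `1`) satisfying the brace compatibility `a∘(b+c) + a = a∘b + a∘c`, where `∘` is the
given group operation of `G`.  In other words, this makes `G` a left brace whose
multiplicative group is `G`. -/
structure BraceOps (G : Type*) [Group G] where
  add : G → G → G
  neg : G → G
  add_assoc : ∀ a b c, add (add a b) c = add a (add b c)
  add_comm : ∀ a b, add a b = add b a
  zero_add : ∀ a, add 1 a = a
  neg_add_cancel : ∀ a, add (neg a) a = 1
  compat : ∀ a b c, add (a * add b c) a = add (a * b) (a * c)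

namespace BraceOps

variable {G : Type*} [Group G]

/-- The lambda map `λ_a(b) = -a + a∘b` of a left brace. -/
def lam (β : BraceOps G) (a b : G) : G :=
  β.add (β.neg a) (a * b)

/-- Natural multiples with respect to the additive structure of the brace. -/
def nsmul (β : BraceOps G) : ℕ → G → G
  | 0, _ => 1
  | n + 1, a => β.add a (β.nsmul n a)

/-- The socle `Soc(B) = {a : a∘b = a + b for all b}` of a left brace. -/
def socle (β : BraceOps G) : Set G :=
  {a | ∀ b : G, a * b = β.add a b}

/-- The Sylow `q`-subgroup (i.e. the `q`-primary component) of the additive group of a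
finite left brace. -/
def addSylow (β : BraceOps G) (q : ℕ) : Set G :=
  {a | ∃ k : ℕ, β.nsmul (q ^ k) a = 1}

/-- `A` is a subgroup of the additive group of the brace. -/
def IsAddSubgroup (β : BraceOps G) (A : Set G) : Prop :=
  1 ∈ A ∧ (∀ a ∈ A, ∀ b ∈ A, β.add a b ∈ A) ∧ ∀ a ∈ A, β.neg a ∈ A

/-- A left ideal of a left brace: an additive subgroup stable under all `λ_a`. -/
def IsLeftIdeal (β : BraceOps G) (L : Set G) : Prop :=
  β.IsAddSubgroup L ∧ ∀ a : G, ∀ b ∈ L, β.lam a b ∈ L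

/-- An ideal of a left brace: a normal subgroup of the multiplicative group stable
under all `λ_a`. -/
def IsIdeal (β : BraceOps G) (I : Set G) : Prop :=
  1 ∈ I ∧ (∀ a ∈ I, ∀ b ∈ I, a * b ∈ I) ∧ (∀ a ∈ I, a⁻¹ ∈ I) ∧
    (∀ g : G, ∀ a ∈ I, g * a * g⁻¹ ∈ I) ∧ ∀ g : G, ∀ a ∈ I, β.lam g a ∈ I

end BraceOps

namespace YBE

variable {X : Type u}

/-- `σ x` as an element of `𝒢(X,r)`. -/
def σg (S : YBE X) (x : X) : ↥S.permGroup :=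
  ⟨S.σ x, Subgroup.subset_closure (Set.mem_range_self x)⟩

/-- The natural left-brace structure on `𝒢(X,r)`: the unique left brace structure whose
multiplicative group is `𝒢(X,r)`, whose additive group is generated by `{σ_x : x ∈ X}`,
and whose lambda map satisfies `λ_g(σ_y) = σ_{g(y)}`. -/
structure IsNaturalBrace (S : YBE X) (β : BraceOps ↥S.permGroup) : Prop where
  lam_sigma : ∀ (g : ↥S.permGroup) (y : X),
    β.lam g (S.σg y) = S.σg ((g : Equiv.Perm X) y)
  add_gen : ∀ A : Set ↥S.permGroup, β.IsAddSubgroup A → (∀ x : X, S.σg x ∈ A) →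
    ∀ g : ↥S.permGroup, g ∈ A

/-- The product `P_{τ(1)} P_{τ(2)} ⋯ P_{τ(i)}` of Sylow subgroups of the additive group of
the left brace `𝒢(X,r)`, taken inside the multiplicative group. -/
def sylProdTake (S : YBE X) (β : BraceOps ↥S.permGroup) {n : ℕ} (p : Fin n → ℕ)
    (τ : Equiv.Perm (Fin n)) (i : ℕ) : Set ↥S.permGroup :=
  ((List.ofFn fun j : Fin n => β.addSylow (p (τ j))).take i).prod

/-- The product `P_{i+1} P_{i+2} ⋯ P_n` of Sylow subgroups of the additive group of the
left brace `𝒢(X,r)`, taken inside the multiplicative group. -/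
def sylProdDrop (S : YBE X) (β : BraceOps ↥S.permGroup) {n : ℕ} (p : Fin n → ℕ)
    (i : ℕ) : Set ↥S.permGroup :=
  ((List.ofFn fun j : Fin n => β.addSylow (p j)).drop i).prod

end YBE

/-- The holomorph `ℤ/(q) ⋊ Aut(ℤ/(q))` of the cyclic group of order `q`. -/
abbrev Hol (q : ℕ) :=
  SemidirectProduct (Multiplicative (ZMod q)) (MulAut (Multiplicative (ZMod q)))
    (MonoidHom.id (MulAut (Multiplicative (ZMod q))))

/-- Kronecker delta `δ_{u,w} ∈ ℤ/(q)`. -/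
noncomputable def kdelta (q : ℕ) {α : Type v} (u w : α) : ZMod q :=
  letI := Classical.propDecidable (u = w)
  if u = w then 1 else 0

/-- The map `σ'_{(a,x)}(b,y) = (b + δ_{x,σ_x(y)}, σ_x(y))` on `ℤ/(q) × Y`. -/
noncomputable def extMap {Y : Type v} (T : YBE Y) (q : ℕ) (a b : ZMod q × Y) :
    ZMod q × Y :=
  (b.1 + kdelta q a.2 (T.σ a.2 b.2), T.σ a.2 b.2)

namespace St6

open Equiv Subgroup

variable {X : Type u} {G : Subgroup (Equiv.Perm X)}

lemma mem_orbIn_self (M : Subgroup ↥G) (x : X) : x ∈ orbIn M x := ⟨1, M.one_mem, rfl⟩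

lemma orbIn_mem_closure (M : Subgroup ↥G) {x y : X} (hy : y ∈ orbIn M x) {t : ↥G}
    (ht : t ∈ M) : (t : Perm X) y ∈ orbIn M x := by
  obtain ⟨s, hs, rfl⟩ := hy
  exact ⟨t * s, M.mul_mem ht hs, by simp⟩

lemma orbIn_image (M : Subgroup ↥G) [hN : M.Normal] (g : ↥G) (x : X) :
    (g : Perm X) '' orbIn M x = orbIn M ((g : Perm X) x) := by
  ext y; constructor
  · rintro ⟨z, ⟨t, ht, rfl⟩, rfl⟩
    exact ⟨g * t * g⁻¹, hN.conj_mem t ht g, by simp⟩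
  · rintro ⟨t, ht, rfl⟩
    refine ⟨((g⁻¹ * t * g : ↥G) : Perm X) x, ⟨g⁻¹ * t * g, ?_, rfl⟩, by simp⟩
    simpa using hN.conj_mem t ht g⁻¹

def blkSetoid (M : Subgroup ↥G) : Setoid X where
  r x y := y ∈ orbIn M x
  iseqv := ⟨fun x => mem_orbIn_self M x,
    (by rintro x y ⟨t, ht, rfl⟩; exact ⟨t⁻¹, M.inv_mem ht, by simp⟩),
    (by rintro x y z ⟨t, ht, rfl⟩ ⟨s, hs, rfl⟩; exact ⟨s * t, M.mul_mem hs ht, by simp⟩)⟩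

def Blk (M : Subgroup ↥G) : Type u := Quotient (blkSetoid M)

variable (M : Subgroup ↥G)

def blk (x : X) : Blk M := Quotient.mk _ x

lemma blk_eq_iff {x y : X} : blk M x = blk M y ↔ y ∈ orbIn M x := by
  constructor
  · exact fun h => Quotient.exact h
  · exact fun h => Quotient.sound h

lemma blk_surjective : Function.Surjective (blk M) := fun b => ⟨b.out, b.out_eq⟩

lemma orbIn_eq_fiber (x : X) : orbIn M x = {y | blk M y = blk M x} := by
  ext y
  simp only [Set.mem_setOf_eq]
  rw [eq_comm, blk_eq_iff]

lemma orbIn_eq_of_blk_eq {x y : X} (h : blk M x = blk M y) : orbIn M x = orbIn M y := by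
  rw [orbIn_eq_fiber, orbIn_eq_fiber, h]

lemma blk_smul [M.Normal] (g : ↥G) : ∀ {x y : X},
    (blkSetoid M).r x y → (blkSetoid M).r ((g : Perm X) x) ((g : Perm X) y) := by
  intro x y h
  have : (g : Perm X) y ∈ (g : Perm X) '' orbIn M x := ⟨y, h, rfl⟩
  rwa [orbIn_image] at this

def rho [M.Normal] : ↥G →* Perm (Blk M) where
  toFun g :=
    { toFun := Quotient.map (fun x => (g : Perm X) x) (fun _ _ h => blk_smul M g h)
      invFun := Quotient.map (fun x => ((g⁻¹ : ↥G) : Perm X) x) (fun _ _ h => blk_smul M g⁻¹ h)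
      left_inv := by
        rintro ⟨x⟩
        show blk M (((g⁻¹ : ↥G) : Perm X) ((g : Perm X) x)) = blk M x
        simp
      right_inv := by
        rintro ⟨x⟩
        show blk M ((g : Perm X) (((g⁻¹ : ↥G) : Perm X) x)) = blk M x
        simp }
  map_one' := by
    ext ⟨x⟩
    show blk M (((1 : ↥G) : Perm X) x) = blk M x
    simp
  map_mul' g h := by
    ext ⟨x⟩
    show blk M (((g * h : ↥G) : Perm X) x) = blk M ((g : Perm X) ((h : Perm X) x))
    simp

lemma rho_blk [M.Normal] (g : ↥G) (x : X) : rho M g (blk M x) = blk M ((g : Perm X) x) := rfl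

end St6
namespace St6

open Equiv Subgroup

variable {X : Type u} {G : Subgroup (Equiv.Perm X)} (M : Subgroup ↥G)

lemma mem_ker_rho_iff [M.Normal] (g : ↥G) :
    g ∈ (rho M).ker ↔ ∀ x : X, blk M ((g : Perm X) x) = blk M x := by
  rw [MonoidHom.mem_ker]
  constructor
  · intro h x
    have := congrArg (fun e : Perm (Blk M) => e (blk M x)) h
    simpa [rho_blk] using this
  · intro h
    ext ⟨x⟩
    show rho M g (blk M x) = blk M x
    rw [rho_blk]; exact h x

lemma M_le_ker_rho [M.Normal] : M ≤ (rho M).ker := by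
  intro m hm
  rw [mem_ker_rho_iff]
  intro x
  rw [eq_comm, blk_eq_iff]
  exact ⟨m, hm, rfl⟩

lemma mem_ker_rho_iff_image [M.Normal] (g : ↥G) :
    g ∈ (rho M).ker ↔ ∀ x : X, (g : Perm X) '' orbIn M x = orbIn M x := by
  rw [mem_ker_rho_iff]
  constructor
  · intro h x
    rw [orbIn_image, orbIn_eq_of_blk_eq M (h x)]
  · intro h x
    have : (g : Perm X) x ∈ orbIn M x := by
      rw [← h x]; exact ⟨x, mem_orbIn_self M x, rfl⟩
    rw [eq_comm, blk_eq_iff]; exact this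

/-- transport of orbits along comap -/
lemma orbIn_comap [M.Normal] (H : Subgroup ↥((rho M).range)) (x : X) :
    orbIn (H.comap (rho M).rangeRestrict) x
      = blk M ⁻¹' (orbIn H (blk M x)) := by
  ext y
  constructor
  · rintro ⟨t, ht, rfl⟩
    exact ⟨(rho M).rangeRestrict t, ht, (rho_blk M t x).symm⟩
  · rintro ⟨s, hs, hsx⟩
    obtain ⟨t, rfl⟩ := (rho M).rangeRestrict_surjective s
    have hblk : blk M ((t : Perm X) x) = blk M y := hsx
    have hy : y ∈ orbIn M ((t : Perm X) x) := by rwa [← blk_eq_iff]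
    obtain ⟨m, hm, rfl⟩ := hy
    refine ⟨m * t, ?_, by simp⟩
    have hmker : m ∈ (rho M).ker := M_le_ker_rho M hm
    have : (rho M).rangeRestrict (m * t) = (rho M).rangeRestrict t := by
      rw [map_mul]
      have : (rho M).rangeRestrict m = 1 := by
        rwa [← MonoidHom.mem_ker, MonoidHom.ker_rangeRestrict]
      rw [this, one_mul]
    rw [Subgroup.mem_comap, this]
    exact hs

lemma image_preimage_blk [M.Normal] (g : ↥G) (S : Set (Blk M)) :
    (g : Perm X) '' (blk M ⁻¹' S) = blk M ⁻¹' ((rho M g : Perm (Blk M)) '' S) := by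
  ext y
  constructor
  · rintro ⟨z, hz, rfl⟩
    exact ⟨blk M z, hz, (rho_blk M g z).symm⟩
  · rintro ⟨b, hb, hby⟩
    refine ⟨(g : Perm X)⁻¹ y, ?_, by simp⟩
    have : blk M ((g : Perm X) ((g : Perm X)⁻¹ y)) = rho M g (blk M ((g : Perm X)⁻¹ y)) :=
      (rho_blk M g _).symm
    simp only [show ∀ z, (g : Perm X) ((g : Perm X)⁻¹ z) = z from fun z => Equiv.apply_symm_apply _ z] at this
    have hb' : rho M g (blk M ((g : Perm X)⁻¹ y)) = rho M g b := by rw [← this, ← hby]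
    have := (rho M g).injective hb'
    rwa [Set.mem_preimage, this]

end St6
namespace St6

open Equiv Subgroup

section Generic

variable {H' H'' : Type*} [Group H'] [Group H'']

/-- restriction of a hom to the comap of a subgroup -/
def comapHom (π : H' →* H'') (B : Subgroup H'') : ↥(B.comap π) →* ↥B :=
  (π.comp (B.comap π).subtype).codRestrict B (fun x => x.2)

lemma comapHom_apply (π : H' →* H'') (B : Subgroup H'') (x : ↥(B.comap π)) :
    (comapHom π B x : H'') = π x := rfl

lemma comapHom_surjective {π : H' →* H''} (hπ : Function.Surjective π) (B : Subgroup H'') :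
    Function.Surjective (comapHom π B) := by
  rintro ⟨b, hb⟩
  obtain ⟨g, rfl⟩ := hπ b
  exact ⟨⟨g, hb⟩, rfl⟩

lemma subgroupOf_comap (π : H' →* H'') (A B : Subgroup H'') :
    (A.comap π).subgroupOf (B.comap π) = (A.subgroupOf B).comap (comapHom π B) := by
  ext ⟨g, hg⟩
  simp only [Subgroup.mem_subgroupOf, Subgroup.mem_comap]
  rfl

lemma relindex_comap_surj {π : H' →* H''} (hπ : Function.Surjective π) (A B : Subgroup H'') :
    (A.comap π).relIndex (B.comap π) = A.relIndex B := by
  show ((A.comap π).subgroupOf (B.comap π)).index = (A.subgroupOf B).index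
  rw [subgroupOf_comap]
  exact Subgroup.index_comap_of_surjective _ (comapHom_surjective hπ B)

open scoped commutatorElement in
lemma exists_normal_abelian (H : Type*) [Group H] [hs : Group.IsSolvable H] [Nontrivial H] :
    ∃ A : Subgroup H, A.Normal ∧ A ≠ ⊥ ∧ ∀ a ∈ A, ∀ b ∈ A, a * b = b * a := by
  have hex : ∃ n, derivedSeries H n = ⊥ := (isSolvable_def H).mp hs
  classical
  have hk : derivedSeries H (Nat.find hex) = ⊥ := Nat.find_spec hex
  have hk0 : Nat.find hex ≠ 0 := by
    intro h0
    rw [h0] at hk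
    simp only [derivedSeries_zero] at hk
    exact top_ne_bot hk
  obtain ⟨k', hkk⟩ := Nat.exists_eq_succ_of_ne_zero hk0
  rw [hkk] at hk
  refine ⟨derivedSeries H k', derivedSeries_normal H k', ?_, ?_⟩
  · exact Nat.find_min hex (by omega)
  · intro a ha b hb
    have : ⁅a, b⁆ ∈ derivedSeries H (k' + 1) :=
      Subgroup.commutator_mem_commutator ha hb
    rw [hk] at this
    have h1 : ⁅a, b⁆ = 1 := this
    exact (commutatorElement_eq_one_iff_mul_comm).mp h1

end Generic

section PrimeFacts

variable {n : ℕ} {p : Fin n → ℕ}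

lemma prime_eq_of_dvd_prod (hp : ∀ i, Nat.Prime (p i)) {q : ℕ} (hq : q.Prime) (h : q ∣ ∏ i, p i) : ∃ j, p j = q := by
  obtain ⟨j, _, hj⟩ := hq.prime.exists_mem_finset_dvd h
  exact ⟨j, ((Nat.prime_dvd_prime_iff_eq hq (hp j)).mp hj).symm⟩

lemma sq_not_dvd_prod (hp : ∀ i, Nat.Prime (p i)) (hinj : Function.Injective p) {q : ℕ} (hq : q.Prime) : ¬ q ^ 2 ∣ ∏ i, p i := by
  intro h
  have h1 : q ∣ ∏ i, p i := dvd_trans (dvd_pow_self q two_ne_zero) h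
  obtain ⟨j₀, rfl⟩ := prime_eq_of_dvd_prod hp hq h1
  rw [← Finset.mul_prod_erase Finset.univ p (Finset.mem_univ j₀)] at h
  have h2 : p j₀ * p j₀ ∣ p j₀ * ∏ i ∈ Finset.univ.erase j₀, p i := by
    rwa [← pow_two]
  have h3 : p j₀ ∣ ∏ i ∈ Finset.univ.erase j₀, p i :=
    (mul_dvd_mul_iff_left (Nat.Prime.ne_zero hq)).mp h2
  obtain ⟨j₁, hj₁, hdvd⟩ := hq.prime.exists_mem_finset_dvd h3
  have : p j₀ = p j₁ := ((Nat.prime_dvd_prime_iff_eq hq (hp j₁)).mp hdvd)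
  exact (Finset.mem_erase.mp hj₁).1 (hinj this.symm)

end PrimeFacts

end St6
namespace St6

open Equiv Subgroup

variable {X : Type u} {G : Subgroup (Equiv.Perm X)} (M : Subgroup ↥G)

lemma orbIn_eq_orbit (x : X) : orbIn M x = MulAction.orbit ↥M x := by
  ext y
  constructor
  · rintro ⟨t, ht, rfl⟩; exact ⟨⟨t, ht⟩, rfl⟩
  · rintro ⟨m, rfl⟩; exact ⟨(m : ↥G), m.2, rfl⟩

lemma card_orbIn_dvd [Finite X] (x : X) : Nat.card (orbIn M x) ∣ Nat.card ↥M := by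
  rw [orbIn_eq_orbit]
  rw [Nat.card_congr (MulAction.orbitEquivQuotientStabilizer ↥M x)]
  rw [← Subgroup.index_eq_card]
  exact Subgroup.index_dvd_card _

lemma orb_card_const [M.Normal] (htrans : ∀ x y : X, ∃ g ∈ G, g x = y) (x y : X) :
    Nat.card (orbIn M x) = Nat.card (orbIn M y) := by
  obtain ⟨g, hg, hgxy⟩ := htrans x y
  have := orbIn_image M (G := G) ⟨g, hg⟩ x
  rw [show ((⟨g, hg⟩ : ↥G) : Perm X) = g from rfl, hgxy] at this
  rw [← this, Nat.card_coe_set_eq, Nat.card_coe_set_eq,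
    Set.ncard_image_of_injective _ g.injective]

lemma card_M_primepow [Finite X] {q : ℕ} (hq : q.Prime) (hexp : ∀ m ∈ M, m ^ q = 1) :
    ∃ k, Nat.card ↥M = q ^ k := by
  classical
  letI : Fintype ↥M := Fintype.ofFinite ↥M
  rw [Nat.card_eq_fintype_card]
  refine ⟨(Fintype.card ↥M).primeFactorsList.length,
    Nat.eq_prime_pow_of_unique_prime_dvd Fintype.card_ne_zero ?_⟩
  intro d hd hdvd
  haveI : Fact (Nat.Prime d) := ⟨hd⟩
  obtain ⟨m, hm⟩ := exists_prime_orderOf_dvd_card (G := ↥M) d hdvd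
  have hmq : m ^ q = 1 := by
    have h1 : ((m : ↥G)) ^ q = 1 := hexp (m : ↥G) m.2
    have : ((m ^ q : ↥M) : ↥G) = ((1 : ↥M) : ↥G) := by push_cast [h1]; rfl
    exact Subtype.coe_injective this
  have : d ∣ q := hm ▸ orderOf_dvd_of_pow_eq_one hmq
  exact (Nat.prime_dvd_prime_iff_eq hd hq).mp this

lemma orb_card_ne_one [Finite X] (hM1 : M ≠ ⊥) : ∃ x : X, Nat.card (orbIn M x) ≠ 1 := by
  obtain ⟨tm, htne⟩ := (Subgroup.ne_bot_iff_exists_ne_one).mp hM1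
  have ht : (tm : ↥G) ∈ M := tm.2
  have htg : ((tm : ↥G) : Perm X) ≠ 1 := by
    intro h
    apply htne
    apply Subtype.ext
    apply Subtype.ext
    simpa using h
  have : ∃ x : X, ((tm : ↥G) : Perm X) x ≠ x := by
    by_contra h
    push_neg at h
    exact htg (Equiv.ext h)
  obtain ⟨x, hx⟩ := this
  refine ⟨x, fun h1 => ?_⟩
  rw [Nat.card_coe_set_eq] at h1
  obtain ⟨a, ha⟩ := Set.ncard_eq_one.mp h1
  have h2 : x ∈ orbIn M x := mem_orbIn_self M x
  have h3 : ((tm : ↥G) : Perm X) x ∈ orbIn M x := ⟨tm, ht, rfl⟩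
  rw [ha, Set.mem_singleton_iff] at h2 h3
  exact hx (h3.trans h2.symm)

lemma card_X_eq_card_blk_mul [Finite X] {c : ℕ}
    (hconst : ∀ x : X, Nat.card (orbIn M x) = c) :
    Nat.card X = Nat.card (Blk M) * c := by
  classical
  letI : Fintype X := Fintype.ofFinite X
  haveI : Finite (Blk M) := Quotient.finite _
  letI : Fintype (Blk M) := Fintype.ofFinite _
  rw [Nat.card_eq_fintype_card, ← Fintype.card_congr (Equiv.sigmaFiberEquiv (blk M)),
    Fintype.card_sigma]
  have hfib : ∀ b : Blk M, Fintype.card {x // blk M x = b} = c := by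
    intro b
    have h1 : {x // blk M x = b} ≃ ↥(orbIn M b.out) := by
      apply Equiv.subtypeEquivRight
      intro x
      rw [orbIn_eq_fiber]
      show blk M x = b ↔ blk M x = blk M b.out
      rw [show blk M b.out = b from Quotient.out_eq b]
    rw [← Nat.card_eq_fintype_card, Nat.card_congr h1, hconst]
  rw [Finset.sum_congr rfl (fun b _ => hfib b), Finset.sum_const, Finset.card_univ,
    Nat.card_eq_fintype_card, smul_eq_mul]

end St6
namespace St6

open Equiv Subgroup

variable {X : Type u} {G : Subgroup (Equiv.Perm X)} (M : Subgroup ↥G)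

lemma act_eq_on_orb (hcomm : ∀ a ∈ M, ∀ b ∈ M, a * b = b * a) {t s : ↥G}
    (ht : t ∈ M) (hs : s ∈ M) {x : X} (h : (t : Perm X) x = (s : Perm X) x) :
    ∀ y ∈ orbIn M x, (t : Perm X) y = (s : Perm X) y := by
  rintro y ⟨n, hn, rfl⟩
  have h1 : t * n = n * t := hcomm t ht n hn
  have h2 : s * n = n * s := hcomm s hs n hn
  calc (t : Perm X) ((n : Perm X) x) = ((t * n : ↥G) : Perm X) x := by simp
    _ = ((n * t : ↥G) : Perm X) x := by rw [h1]
    _ = (n : Perm X) ((t : Perm X) x) := by simp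
    _ = (n : Perm X) ((s : Perm X) x) := by rw [h]
    _ = ((n * s : ↥G) : Perm X) x := by simp
    _ = ((s * n : ↥G) : Perm X) x := by rw [h2]
    _ = (s : Perm X) ((n : Perm X) x) := by simp

lemma pow_mod_q {q : ℕ} (hexp : ∀ m ∈ M, m ^ q = 1) {t : ↥G} (ht : t ∈ M)
    (i : ℕ) : t ^ i = t ^ (i % q) := by
  conv_lhs => rw [← Nat.div_add_mod i q]
  rw [pow_add, pow_mul, hexp t ht, one_pow, one_mul]

/-- the multiplication-by-a-unit automorphism of `Multiplicative (ZMod q)` -/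
def zmodAut (q : ℕ) (u : (ZMod q)ˣ) : MulAut (Multiplicative (ZMod q)) :=
  AddEquiv.toMultiplicative (AddAut.mulLeft u)

lemma zmodAut_apply (q : ℕ) (u : (ZMod q)ˣ) (a : ZMod q) :
    zmodAut q u (Multiplicative.ofAdd a) = Multiplicative.ofAdd ((u : ZMod q) * a) := rfl

lemma zmodAut_mul (q : ℕ) (u v : (ZMod q)ˣ) :
    zmodAut q (u * v) = zmodAut q u * zmodAut q v := by
  ext a
  change Multiplicative.ofAdd (((u * v : (ZMod q)ˣ) : ZMod q) * a.toAdd)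
      = Multiplicative.ofAdd ((u : ZMod q) * ((v : ZMod q) * a.toAdd))
  rw [Units.val_mul, mul_assoc]

lemma zmodAut_one (q : ℕ) : zmodAut q 1 = 1 := by
  ext a
  change Multiplicative.ofAdd (((1 : (ZMod q)ˣ) : ZMod q) * a.toAdd) = a
  rw [Units.val_one, one_mul]
  rfl

lemma zmodAut_injective (q : ℕ) : Function.Injective (zmodAut q) := by
  intro u v h
  have := congrArg (fun e : MulAut (Multiplicative (ZMod q)) => e (Multiplicative.ofAdd 1)) h
  simp only [zmodAut_apply, mul_one] at this
  exact Units.ext (by exact_mod_cast Multiplicative.ofAdd.injective this)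

end St6
namespace St6

open Equiv Subgroup

variable {X : Type u} {G : Subgroup (Equiv.Perm X)} (M : Subgroup ↥G)

lemma key_step [Finite X] [M.Normal] {q : ℕ} (hq : q.Prime)
    (hexp : ∀ m ∈ M, m ^ q = 1) (hcomm : ∀ a ∈ M, ∀ b ∈ M, a * b = b * a)
    (horb : ∀ x : X, Nat.card (orbIn M x) = q) :
    ∃ T1 : Subgroup ↥G, T1.Normal ∧ M ≤ T1 ∧ T1 ≤ (rho M).ker ∧
      (∀ x : X, orbIn T1 x = orbIn M x) ∧
      (∃ φ : ↥((rho M).ker) →* (Blk M → Hol q), φ.ker = ⊥) ∧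
      (∃ k, Nat.card ↥T1 = q ^ k) ∧
      ¬ q ∣ (T1.subgroupOf (rho M).ker).index := by
  classical
  haveI : Fact q.Prime := ⟨hq⟩
  haveI : NeZero q := ⟨hq.ne_zero⟩
  set pt : Blk M → X := fun b => b.out with hpt
  have hptblk : ∀ b, blk M (pt b) = b := fun b => Quotient.out_eq b
  have hmemorb : ∀ x : X, x ∈ orbIn M (pt (blk M x)) := by
    intro x
    rw [orbIn_eq_fiber]
    show blk M x = blk M (pt (blk M x))
    rw [hptblk]
  -- generator of each block
  have hex_m : ∀ b : Blk M, ∃ t : ↥G, t ∈ M ∧ (t : Perm X) (pt b) ≠ pt b := by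
    intro b
    by_contra h
    push_neg at h
    have horbeq : orbIn M (pt b) = {pt b} := by
      apply Set.eq_of_subset_of_ncard_le
      · rintro y ⟨t, ht, rfl⟩
        exact h t ht
      · rw [Set.ncard_singleton, ← Nat.card_coe_set_eq, horb]
        exact hq.one_lt.le
      · exact Set.finite_singleton _
    have := horb (pt b)
    rw [horbeq] at this
    simp only [Nat.card_unique] at this
    exact hq.one_lt.ne' this.symm
  choose m hmM hmne using hex_m
  -- coordinates
  set f : Blk M → ZMod q → X := fun b j => ((m b ^ j.val : ↥G) : Perm X) (pt b) with hf
  have hfmem : ∀ b j, f b j ∈ orbIn M (pt b) := fun b j => ⟨m b ^ j.val, pow_mem (hmM b) _, rfl⟩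
  have hfnat : ∀ b (i : ℕ), ((m b ^ i : ↥G) : Perm X) (pt b) = f b (i : ZMod q) := by
    intro b i
    show _ = ((m b ^ ((i : ZMod q)).val : ↥G) : Perm X) (pt b)
    rw [ZMod.val_natCast, ← pow_mod_q M hexp (hmM b)]
  have hvalcast : ∀ j : ZMod q, ((j.val : ℕ) : ZMod q) = j := by
    intro j; simp [ZMod.natCast_val, ZMod.cast_id]
  have hfixpow : ∀ b (i : ℕ), ((m b ^ i : ↥G) : Perm X) (pt b) = pt b → (i : ZMod q) = 0 := by
    intro b i hfix
    by_contra hne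
    have hr : i % q ≠ 0 := by
      intro h0
      apply hne
      rw [ZMod.natCast_eq_zero_iff]
      exact Nat.dvd_of_mod_eq_zero h0
    have hrq : i % q < q := Nat.mod_lt _ hq.pos
    have hcop : (i % q).Coprime q := by
      rw [Nat.coprime_comm]
      exact (Nat.Prime.coprime_iff_not_dvd hq).mpr (fun hdvd => hr (Nat.eq_zero_of_dvd_of_lt hdvd hrq))
    obtain ⟨s, -, hs⟩ := Nat.exists_mul_mod_eq_one_of_coprime hcop hq.one_lt
    have hfix' : ∀ k : ℕ, ((m b ^ (i * k) : ↥G) : Perm X) (pt b) = pt b := by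
      intro k
      induction k with
      | zero => simp
      | succ k ih =>
        have : m b ^ (i * (k+1)) = m b ^ (i * k) * m b ^ i := by rw [← pow_add]; ring_nf
        rw [this, Subgroup.coe_mul, Equiv.Perm.mul_apply, hfix, ih]
    have h2 : (i * s) % q = 1 := by
      rw [Nat.mul_mod]
      rw [Nat.mul_mod] at hs
      rwa [Nat.mod_mod_of_dvd _ dvd_rfl] at hs
    have h3 := hfix' s
    rw [pow_mod_q M hexp (hmM b) (i * s), h2, pow_one] at h3
    exact hmne b h3
  have hfinj : ∀ b, Function.Injective (f b) := by
    intro b j1 j2 h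
    rcases le_total j2.val j1.val with hle | hle
    case _ =>
      have e1 : m b ^ j2.val * m b ^ (j1.val - j2.val) = m b ^ j1.val := by
        rw [← pow_add, Nat.add_sub_cancel' hle]
      have hd : ((m b ^ (j1.val - j2.val) : ↥G) : Perm X) (pt b) = pt b := by
        apply Equiv.injective ((m b ^ j2.val : ↥G) : Perm X)
        have : ((m b ^ j2.val : ↥G) : Perm X) (((m b ^ (j1.val - j2.val) : ↥G) : Perm X) (pt b))
            = ((m b ^ j1.val : ↥G) : Perm X) (pt b) := by
          rw [← e1, Subgroup.coe_mul, Equiv.Perm.mul_apply]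
        rw [this]
        exact h
      have h0 := hfixpow b _ hd
      rw [Nat.cast_sub hle, hvalcast, hvalcast, sub_eq_zero] at h0
      exact h0
    case _ =>
      have e1 : m b ^ j1.val * m b ^ (j2.val - j1.val) = m b ^ j2.val := by
        rw [← pow_add, Nat.add_sub_cancel' hle]
      have hd : ((m b ^ (j2.val - j1.val) : ↥G) : Perm X) (pt b) = pt b := by
        apply Equiv.injective ((m b ^ j1.val : ↥G) : Perm X)
        have : ((m b ^ j1.val : ↥G) : Perm X) (((m b ^ (j2.val - j1.val) : ↥G) : Perm X) (pt b))
            = ((m b ^ j2.val : ↥G) : Perm X) (pt b) := by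
          rw [← e1, Subgroup.coe_mul, Equiv.Perm.mul_apply]
        rw [this]
        exact h.symm
      have h0 := hfixpow b _ hd
      rw [Nat.cast_sub hle, hvalcast, hvalcast, sub_eq_zero] at h0
      exact h0.symm
  have hrange : ∀ b, Set.range (f b) = orbIn M (pt b) := by
    intro b
    apply Set.eq_of_subset_of_ncard_le
    · rintro y ⟨j, rfl⟩; exact hfmem b j
    · rw [← Nat.card_coe_set_eq (orbIn M (pt b)), horb, ← Set.image_univ,
        Set.ncard_image_of_injective _ (hfinj b), Set.ncard_univ, Nat.card_zmod]
    · exact Set.toFinite _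
  set cb : Blk M → X → ZMod q := fun b => Function.invFun (f b) with hcb
  have hcf : ∀ b j, cb b (f b j) = j := fun b => Function.leftInverse_invFun (hfinj b)
  have hfc : ∀ b {y : X}, y ∈ orbIn M (pt b) → f b (cb b y) = y := by
    intro b y hy
    apply Function.invFun_eq
    rw [← hrange b] at hy
    exact hy
  have hK1orb : ∀ g ∈ (rho M).ker, ∀ b : Blk M, ∀ y ∈ orbIn M (pt b),
      (g : Perm X) y ∈ orbIn M (pt b) := by
    intro g hg b y hy
    have := (mem_ker_rho_iff_image M g).mp hg (pt b)
    rw [← this]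
    exact ⟨y, hy, rfl⟩
  have hpowact : ∀ (b : Blk M) (t : ↥G), t ∈ M → ∀ (k : ℕ),
      (t : Perm X) (pt b) = ((m b ^ k : ↥G) : Perm X) (pt b) → ∀ (i : ℕ),
      ∀ y ∈ orbIn M (pt b), ((t ^ i : ↥G) : Perm X) y = ((m b ^ (k * i) : ↥G) : Perm X) y := by
    intro b t ht k hk i
    induction i with
    | zero => intro y hy; simp
    | succ i ih =>
      intro y hy
      have h1 : t ^ (i + 1) = t * t ^ i := by rw [pow_succ']
      have h2 : m b ^ (k * (i + 1)) = m b ^ k * m b ^ (k * i) := by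
        rw [← pow_add, Nat.mul_succ]
        ring_nf
      have h3 : ((m b ^ (k * i) : ↥G) : Perm X) y ∈ orbIn M (pt b) :=
        orbIn_mem_closure M hy (pow_mem (hmM b) _)
      have h4 : (t : Perm X) (((m b ^ (k * i) : ↥G) : Perm X) y)
          = ((m b ^ k : ↥G) : Perm X) (((m b ^ (k * i) : ↥G) : Perm X) y) :=
        act_eq_on_orb M hcomm ht (pow_mem (hmM b) k) hk _ h3
      rw [h1, h2, Subgroup.coe_mul, Subgroup.coe_mul, Equiv.Perm.mul_apply,
        Equiv.Perm.mul_apply, ih y hy, h4]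
  have haffine : ∀ (g : ↥((rho M).ker)) (b : Blk M), ∃ (a u : ZMod q), u ≠ 0 ∧
      ∀ j, ((g : ↥G) : Perm X) (f b j) = f b (u * j + a) := by
    intro g b
    have hgker := g.2
    have hgorb : ∀ y ∈ orbIn M (pt b), (((g : ↥G)) : Perm X) y ∈ orbIn M (pt b) :=
      hK1orb _ hgker b
    set a := cb b (((g : ↥G) : Perm X) (pt b)) with ha
    have hga : ((g : ↥G) : Perm X) (pt b) = f b a :=
      (hfc b (hgorb _ (mem_orbIn_self M _))).symm
    set t := (g : ↥G) * m b * (g : ↥G)⁻¹ with htdef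
    have htM : t ∈ M := (inferInstance : M.Normal).conj_mem _ (hmM b) _
    have htorb : (t : Perm X) (pt b) ∈ orbIn M (pt b) := ⟨t, htM, rfl⟩
    set k := cb b ((t : Perm X) (pt b)) with hk
    have htk : (t : Perm X) (pt b) = ((m b ^ (k.val) : ↥G) : Perm X) (pt b) :=
      (hfc b htorb).symm
    have hform : ∀ j, ((g : ↥G) : Perm X) (f b j) = f b (k * j + a) := by
      intro j
      have e0 : (g : ↥G) * m b ^ j.val = t ^ j.val * (g : ↥G) := by
        rw [htdef, conj_pow]
        group
      calc ((g : ↥G) : Perm X) (f b j)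
          = (((g : ↥G) * m b ^ j.val : ↥G) : Perm X) (pt b) := by
            rw [Subgroup.coe_mul, Equiv.Perm.mul_apply]
        _ = ((t ^ j.val * (g : ↥G) : ↥G) : Perm X) (pt b) := by rw [e0]
        _ = ((t ^ j.val : ↥G) : Perm X) (((g : ↥G) : Perm X) (pt b)) := by
            rw [Subgroup.coe_mul, Equiv.Perm.mul_apply]
        _ = ((t ^ j.val : ↥G) : Perm X) (f b a) := by rw [hga]
        _ = ((m b ^ (k.val * j.val) : ↥G) : Perm X) (f b a) :=
            hpowact b t htM k.val htk j.val (f b a) (hfmem b a)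
        _ = ((m b ^ (k.val * j.val) * m b ^ a.val : ↥G) : Perm X) (pt b) := by
            rw [Subgroup.coe_mul, Equiv.Perm.mul_apply]
        _ = ((m b ^ (k.val * j.val + a.val) : ↥G) : Perm X) (pt b) := by rw [pow_add]
        _ = f b (((k.val * j.val + a.val : ℕ) : ZMod q)) := hfnat b _
        _ = f b (k * j + a) := by push_cast [hvalcast]; rfl
    have hkne : k ≠ 0 := by
      intro hk0
      have h1 : ((g : ↥G) : Perm X) (f b 0) = f b a := by
        rw [hform 0, hk0]; ring_nf
      have h2 : ((g : ↥G) : Perm X) (f b 1) = f b a := by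
        rw [hform 1, hk0]; ring_nf
      have := Equiv.injective ((g : ↥G) : Perm X) (h1.trans h2.symm)
      have h01 := hfinj b this
      exact zero_ne_one h01
    exact ⟨a, k, hkne, hform⟩
  choose A U hU0 hform using haffine
  have huniq : ∀ (g : ↥((rho M).ker)) (b : Blk M) (a u : ZMod q),
      (∀ j, ((g : ↥G) : Perm X) (f b j) = f b (u * j + a)) → a = A g b ∧ u = U g b := by
    intro g b a u hform'
    have h0 : f b (u * 0 + a) = f b (U g b * 0 + A g b) := by
      rw [← hform' 0, ← hform g b 0]
    have ha : a = A g b := by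
      have := hfinj b h0
      simpa using this
    have h1 : f b (u * 1 + a) = f b (U g b * 1 + A g b) := by
      rw [← hform' 1, ← hform g b 1]
    have h2 := hfinj b h1
    rw [mul_one, mul_one, ha] at h2
    exact ⟨ha, add_right_cancel h2⟩
  have hmulAU : ∀ (g h : ↥((rho M).ker)) (b : Blk M),
      A (g * h) b = U g b * A h b + A g b ∧ U (g * h) b = U g b * U h b := by
    intro g h b
    have hcomp : ∀ j, (((g * h : ↥((rho M).ker)) : ↥G) : Perm X) (f b j)
        = f b ((U g b * U h b) * j + (U g b * A h b + A g b)) := by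
      intro j
      have hco : (((g * h : ↥((rho M).ker)) : ↥G) : Perm X) (f b j)
          = ((g : ↥G) : Perm X) (((h : ↥G) : Perm X) (f b j)) := rfl
      rw [hco, hform h b j, hform g b _]
      congr 1
      ring
    obtain ⟨ha, hu⟩ := huniq (g * h) b _ _ hcomp
    exact ⟨ha.symm, hu.symm⟩
  have hone : ∀ b, A 1 b = 0 ∧ U 1 b = 1 := by
    intro b
    have hid : ∀ j, (((1 : ↥((rho M).ker)) : ↥G) : Perm X) (f b j) = f b (1 * j + 0) := by
      intro j
      simp
    obtain ⟨h1, h2⟩ := huniq 1 b 0 1 hid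
    exact ⟨h1.symm, h2.symm⟩
  have hgone : ∀ g : ↥((rho M).ker), (∀ b, A g b = 0 ∧ U g b = 1) → g = 1 := by
    intro g hgb
    have hfix : ∀ x : X, ((g : ↥G) : Perm X) x = x := by
      intro x
      have hx : x ∈ orbIn M (pt (blk M x)) := hmemorb x
      have hxf : x = f (blk M x) (cb (blk M x) x) := (hfc (blk M x) hx).symm
      conv_lhs => rw [hxf]
      rw [hform g (blk M x) _, (hgb (blk M x)).1, (hgb (blk M x)).2, one_mul, add_zero]
      exact hxf.symm
    apply Subtype.ext
    apply Subtype.ext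
    exact Equiv.ext hfix
  have hpt0 : ∀ b, f b 0 = pt b := by
    intro b
    show ((m b ^ (0 : ZMod q).val : ↥G) : Perm X) (pt b) = pt b
    rw [ZMod.val_zero, pow_zero]
    rfl
  -- the holomorph embedding
  set Φ : ↥((rho M).ker) →* (Blk M → Hol q) :=
    { toFun := fun g b =>
        ⟨Multiplicative.ofAdd (A g b), zmodAut q (Units.mk0 (U g b) (hU0 g b))⟩
      map_one' := by
        funext b
        refine SemidirectProduct.ext ?_ ?_
        · show Multiplicative.ofAdd (A 1 b) = 1
          rw [(hone b).1]
          rfl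
        · show zmodAut q (Units.mk0 (U 1 b) _) = 1
          have : Units.mk0 (U 1 b) (hU0 1 b) = 1 := Units.ext (by simpa using (hone b).2)
          rw [this, zmodAut_one]
      map_mul' := fun g h => by
        funext b
        obtain ⟨ha, hu⟩ := hmulAU g h b
        refine SemidirectProduct.ext ?_ ?_
        · show Multiplicative.ofAdd (A (g * h) b)
            = Multiplicative.ofAdd (A g b) * zmodAut q (Units.mk0 (U g b) (hU0 g b))
                (Multiplicative.ofAdd (A h b))
          rw [zmodAut_apply, ha, ← ofAdd_add]
          congr 1
          show U g b * A h b + A g b = A g b + (U g b) * A h b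
          ring
        · show zmodAut q (Units.mk0 (U (g * h) b) _)
            = zmodAut q (Units.mk0 (U g b) _) * zmodAut q (Units.mk0 (U h b) _)
          rw [← zmodAut_mul]
          congr 1
          apply Units.ext
          simpa using hu }
    with hPhidef
  have hkerΦ : Φ.ker = ⊥ := by
    rw [eq_bot_iff]
    intro g hg
    rw [MonoidHom.mem_ker] at hg
    rw [Subgroup.mem_bot]
    apply hgone
    intro b
    have hb := congrFun hg b
    constructor
    · have := congrArg SemidirectProduct.left hb
      simpa [Φ] using this
    · have := congrArg SemidirectProduct.right hb
      have h2 : zmodAut q (Units.mk0 (U g b) (hU0 g b)) = zmodAut q 1 := by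
        rw [zmodAut_one]
        simpa [Φ] using this
      have h3 := zmodAut_injective q h2
      have := congrArg Units.val h3
      simpa using this
  -- the subgroup T1
  set T1 : Subgroup ↥G :=
    { carrier := {g : ↥G | ∀ x : X, ∃ t : ↥G, t ∈ M ∧
        ∀ y ∈ orbIn M x, (g : Perm X) y = (t : Perm X) y}
      one_mem' := fun x => ⟨1, M.one_mem, fun y _ => rfl⟩
      mul_mem' := by
        intro g h hg hh x
        obtain ⟨t, htM', hty⟩ := hh x
        obtain ⟨s, hsM', hsy⟩ := hg x
        refine ⟨s * t, M.mul_mem hsM' htM', ?_⟩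
        intro y hy
        have h2 : (t : Perm X) y ∈ orbIn M x := orbIn_mem_closure M hy htM'
        rw [Subgroup.coe_mul, Equiv.Perm.mul_apply, Subgroup.coe_mul, Equiv.Perm.mul_apply,
          hty y hy, hsy _ h2]
      inv_mem' := by
        intro g hg x
        obtain ⟨t, htM', hty⟩ := hg x
        refine ⟨t⁻¹, M.inv_mem htM', ?_⟩
        intro y hy
        have h2 : ((t⁻¹ : ↥G) : Perm X) y ∈ orbIn M x :=
          orbIn_mem_closure M hy (M.inv_mem htM')
        have h3 := hty _ h2
        have h4 : (t : Perm X) (((t⁻¹ : ↥G) : Perm X) y) = y := by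
          rw [Subgroup.coe_inv]; exact Equiv.apply_symm_apply _ _
        rw [h4] at h3
        have e1 : (g : Perm X) (((g⁻¹ : ↥G) : Perm X) y) = y := by
          rw [Subgroup.coe_inv]; exact Equiv.apply_symm_apply _ _
        exact Equiv.injective (g : Perm X) (e1.trans h3.symm) }
    with hT1def
  have hT1mem : ∀ g : ↥G, g ∈ T1 ↔ ∀ x : X, ∃ t : ↥G, t ∈ M ∧
      ∀ y ∈ orbIn M x, (g : Perm X) y = (t : Perm X) y := fun g => Iff.rfl
  have hT1normal : T1.Normal := by
    constructor
    intro g hg h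
    rw [hT1mem]
    intro x
    obtain ⟨t, htM', hty⟩ := hg (((h⁻¹ : ↥G) : Perm X) x)
    refine ⟨h * t * h⁻¹, (inferInstance : M.Normal).conj_mem t htM' h, ?_⟩
    intro y hy
    have hyy : ((h⁻¹ : ↥G) : Perm X) y ∈ orbIn M (((h⁻¹ : ↥G) : Perm X) x) := by
      rw [← orbIn_image M h⁻¹ x]
      exact ⟨y, hy, rfl⟩
    have h5 := hty _ hyy
    show ((h * g * h⁻¹ : ↥G) : Perm X) y = ((h * t * h⁻¹ : ↥G) : Perm X) y
    simp only [Subgroup.coe_mul, Subgroup.coe_inv, Equiv.Perm.mul_apply]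
    simp only [Subgroup.coe_inv] at h5
    rw [h5]
  have hMT1 : M ≤ T1 := by
    intro t ht
    rw [hT1mem]
    exact fun x => ⟨t, ht, fun y _ => rfl⟩
  have hT1K1 : T1 ≤ (rho M).ker := by
    intro g hg
    rw [mem_ker_rho_iff_image]
    intro x
    obtain ⟨t, htM', hty⟩ := hg x
    have himg : (g : Perm X) '' orbIn M x = (t : Perm X) '' orbIn M x :=
      Set.image_congr hty
    rw [himg, orbIn_image M t x]
    apply orbIn_eq_of_blk_eq
    rw [eq_comm, blk_eq_iff]
    exact ⟨t, htM', rfl⟩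
  have horbT1 : ∀ x : X, orbIn T1 x = orbIn M x := by
    intro x
    apply subset_antisymm
    · rintro y ⟨t, ht, rfl⟩
      obtain ⟨s, hsM', hsy⟩ := ht x
      rw [hsy x (mem_orbIn_self M x)]
      exact ⟨s, hsM', rfl⟩
    · rintro y ⟨t, ht, rfl⟩
      exact ⟨t, hMT1 ht, rfl⟩
  have hT1iff : ∀ g : ↥((rho M).ker), ((g : ↥G) ∈ T1 ↔ ∀ b, U g b = 1) := by
    intro g
    constructor
    · intro hgT b
      obtain ⟨t, htM', hty⟩ := hgT (pt b)
      have h1 : (t : Perm X) (pt b) = f b (A g b) := by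
        rw [← hty (pt b) (mem_orbIn_self M _)]
        conv_lhs => rw [show pt b = f b 0 from (hpt0 b).symm]
        rw [hform g b 0, mul_zero, zero_add]
      have h1' : (t : Perm X) (pt b) = ((m b ^ (A g b).val : ↥G) : Perm X) (pt b) := h1
      have h2 := act_eq_on_orb M hcomm htM' (pow_mem (hmM b) (A g b).val) h1'
      have h3 : ∀ j, ((g : ↥G) : Perm X) (f b j) = f b (1 * j + A g b) := by
        intro j
        rw [hty _ (hfmem b j), h2 _ (hfmem b j)]
        show ((m b ^ (A g b).val : ↥G) : Perm X) (((m b ^ j.val : ↥G) : Perm X) (pt b)) = _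
        rw [← Equiv.Perm.mul_apply, ← Subgroup.coe_mul, ← pow_add, hfnat]
        congr 1
        push_cast [hvalcast]
        ring
      exact ((huniq g b _ 1 h3).2).symm
    · intro hU
      rw [hT1mem]
      intro x
      have horbx : orbIn M x = orbIn M (pt (blk M x)) :=
        orbIn_eq_of_blk_eq M (by rw [hptblk])
      refine ⟨m (blk M x) ^ (A g (blk M x)).val, pow_mem (hmM (blk M x)) _, ?_⟩
      intro y hy
      rw [horbx] at hy
      have h4 : y = f (blk M x) (cb (blk M x) y) := (hfc (blk M x) hy).symm
      conv_lhs => rw [h4]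
      rw [hform g (blk M x) _, hU (blk M x), one_mul]
      show _ = ((m (blk M x) ^ (A g (blk M x)).val : ↥G) : Perm X) y
      conv_rhs => rw [h4]
      show _ = ((m (blk M x) ^ (A g (blk M x)).val : ↥G) : Perm X)
        (((m (blk M x) ^ (cb (blk M x) y).val : ↥G) : Perm X) (pt (blk M x)))
      rw [← Equiv.Perm.mul_apply, ← Subgroup.coe_mul, ← pow_add, hfnat]
      congr 1
      push_cast [hvalcast]
      ring
  haveI : Finite (Blk M) := Quotient.finite _
  letI : Fintype (Blk M) := Fintype.ofFinite _
  -- cardinality of T1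
  have hcardT1 : ∃ k, Nat.card ↥T1 = q ^ k := by
    have hχmul : ∀ (t s : ↥T1) (b : Blk M),
        A (Subgroup.inclusion hT1K1 (t * s)) b
          = A (Subgroup.inclusion hT1K1 t) b + A (Subgroup.inclusion hT1K1 s) b := by
      intro t s b
      have h1 : Subgroup.inclusion hT1K1 (t * s)
          = Subgroup.inclusion hT1K1 t * Subgroup.inclusion hT1K1 s := rfl
      rw [h1, (hmulAU _ _ b).1, ((hT1iff (Subgroup.inclusion hT1K1 t)).mp t.2) b, one_mul,
        add_comm]
    set χ : ↥T1 →* (Blk M → Multiplicative (ZMod q)) :=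
      { toFun := fun t b => Multiplicative.ofAdd (A (Subgroup.inclusion hT1K1 t) b)
        map_one' := by
          funext b
          show Multiplicative.ofAdd (A (Subgroup.inclusion hT1K1 (1 : ↥T1)) b) = 1
          have h1 : Subgroup.inclusion hT1K1 (1 : ↥T1) = 1 := rfl
          rw [h1, (hone b).1]
          rfl
        map_mul' := fun t s => by
          funext b
          show Multiplicative.ofAdd (A (Subgroup.inclusion hT1K1 (t * s)) b)
            = Multiplicative.ofAdd (A (Subgroup.inclusion hT1K1 t) b)
              * Multiplicative.ofAdd (A (Subgroup.inclusion hT1K1 s) b)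
          rw [hχmul t s b]
          exact ofAdd_add _ _ } with hχdef
    have hχapp : ∀ (t : ↥T1) (b : Blk M),
        χ t b = Multiplicative.ofAdd (A (Subgroup.inclusion hT1K1 t) b) := fun t b => rfl
    have hχinj : Function.Injective χ := by
      intro t s hts
      have hAeq : ∀ b, A (Subgroup.inclusion hT1K1 t) b = A (Subgroup.inclusion hT1K1 s) b := by
        intro b
        have h0 := congrFun hts b
        rw [hχapp, hχapp] at h0
        simpa using h0
      apply Subtype.ext
      apply Subtype.ext
      apply Equiv.ext
      intro x
      have hx : x ∈ orbIn M (pt (blk M x)) := hmemorb x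
      have hxf : x = f (blk M x) (cb (blk M x) x) := (hfc _ hx).symm
      have ht1 : (((t : ↥G)) : Perm X) x = f (blk M x)
          (U (Subgroup.inclusion hT1K1 t) (blk M x) * (cb (blk M x) x)
            + A (Subgroup.inclusion hT1K1 t) (blk M x)) := by
        conv_lhs => rw [hxf]
        exact hform (Subgroup.inclusion hT1K1 t) (blk M x) _
      have hs1 : (((s : ↥G)) : Perm X) x = f (blk M x)
          (U (Subgroup.inclusion hT1K1 s) (blk M x) * (cb (blk M x) x)
            + A (Subgroup.inclusion hT1K1 s) (blk M x)) := by
        conv_lhs => rw [hxf]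
        exact hform (Subgroup.inclusion hT1K1 s) (blk M x) _
      rw [ht1, hs1, hAeq, ((hT1iff _).mp t.2) (blk M x), ((hT1iff _).mp s.2) (blk M x)]
    have hdvd : Nat.card ↥T1 ∣ Nat.card (Blk M → Multiplicative (ZMod q)) :=
      Subgroup.card_dvd_of_injective χ hχinj
    have hcardpi : Nat.card (Blk M → Multiplicative (ZMod q)) = q ^ Fintype.card (Blk M) := by
      rw [Nat.card_pi]
      have : ∀ b : Blk M, Nat.card (Multiplicative (ZMod q)) = q := by
        intro b
        rw [Nat.card_congr (Multiplicative.toAdd (α := ZMod q)), Nat.card_zmod]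
      rw [Finset.prod_congr rfl (fun b _ => this b), Finset.prod_const, Finset.card_univ]
    rw [hcardpi] at hdvd
    obtain ⟨k, _, hk⟩ := (Nat.dvd_prime_pow hq).mp hdvd
    exact ⟨k, hk⟩
  -- index of T1 in K1
  have hindexT1 : ¬ q ∣ (T1.subgroupOf (rho M).ker).index := by
    set Ψ : ↥((rho M).ker) →* (Blk M → (ZMod q)ˣ) :=
      { toFun := fun g b => Units.mk0 (U g b) (hU0 g b)
        map_one' := by
          funext b
          show Units.mk0 (U 1 b) (hU0 1 b) = 1
          exact Units.ext (by simpa using (hone b).2)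
        map_mul' := fun g h => by
          funext b
          show Units.mk0 (U (g * h) b) (hU0 (g * h) b)
            = Units.mk0 (U g b) (hU0 g b) * Units.mk0 (U h b) (hU0 h b)
          exact Units.ext (by simpa using (hmulAU g h b).2) } with hΨdef
    have hΨapp : ∀ (g : ↥((rho M).ker)) (b : Blk M),
        Ψ g b = Units.mk0 (U g b) (hU0 g b) := fun g b => rfl
    have hkerΨ : Ψ.ker = T1.subgroupOf (rho M).ker := by
      ext g
      rw [MonoidHom.mem_ker, Subgroup.mem_subgroupOf, hT1iff g]
      constructor
      · intro h b
        have h1 := congrFun h b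
        rw [hΨapp] at h1
        have h2 := congrArg Units.val h1
        simpa using h2
      · intro h
        funext b
        rw [hΨapp]
        exact Units.ext (by simpa using h b)
    have hidx : (T1.subgroupOf (rho M).ker).index = Nat.card ↥Ψ.range := by
      rw [← hkerΨ, Subgroup.index_ker]
    have hrangedvd : Nat.card ↥Ψ.range ∣ Nat.card (Blk M → (ZMod q)ˣ) :=
      Subgroup.card_subgroup_dvd_card _
    have hcardu : Nat.card (Blk M → (ZMod q)ˣ) = (q - 1) ^ Fintype.card (Blk M) := by
      rw [Nat.card_pi]
      have : ∀ b : Blk M, Nat.card (ZMod q)ˣ = q - 1 := by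
        intro b
        rw [Nat.card_eq_fintype_card, ZMod.card_units_eq_totient, Nat.totient_prime hq]
      rw [Finset.prod_congr rfl (fun b _ => this b), Finset.prod_const, Finset.card_univ]
    intro hdvd
    rw [hidx] at hdvd
    have h1 : q ∣ (q - 1) ^ Fintype.card (Blk M) := hcardu ▸ hdvd.trans hrangedvd
    have h2 : q ∣ q - 1 := hq.prime.dvd_of_dvd_pow h1
    have h3 : q - 1 ≠ 0 := by
      have := hq.one_lt
      omega
    have h4 := Nat.le_of_dvd (Nat.pos_of_ne_zero h3) h2
    have := hq.one_lt
    omega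
  exact ⟨T1, hT1normal, hMT1, hT1K1, horbT1, ⟨Φ, hkerΦ⟩, hcardT1, hindexT1⟩

end St6
namespace St6

open Equiv Subgroup

section FinProd

variable {n : ℕ}

lemma prod_filter_succ (h : Fin (n + 1) → ℕ) (i' : Fin n) :
    ∏ j ∈ Finset.filter (fun j => i'.succ < j) Finset.univ, h j
      = ∏ j ∈ Finset.filter (fun j => i' < j) Finset.univ, h j.succ := by
  rw [show Finset.filter (fun j => i'.succ < j) Finset.univ
      = Finset.map ⟨Fin.succ, Fin.succ_injective n⟩
          (Finset.filter (fun j => i' < j) Finset.univ) from ?_]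
  · rw [Finset.prod_map]
    rfl
  · ext j
    simp only [Finset.mem_filter, Finset.mem_univ, true_and, Finset.mem_map,
      Function.Embedding.coeFn_mk]
    constructor
    · intro hj
      have hj0 : j ≠ 0 := by
        intro h0
        rw [h0] at hj
        exact absurd hj (by simp [Fin.lt_def])
      obtain ⟨k, rfl⟩ := Fin.exists_succ_eq.mpr hj0
      exact ⟨k, ⟨Fin.succ_lt_succ_iff.mp hj, rfl⟩⟩
    · rintro ⟨k, hk, rfl⟩
      exact Fin.succ_lt_succ_iff.mpr hk

lemma prod_filter_zero (h : Fin (n + 1) → ℕ) :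
    ∏ j ∈ Finset.filter (fun j => (0 : Fin (n + 1)) < j) Finset.univ, h j
      = ∏ j : Fin n, h j.succ := by
  rw [show Finset.filter (fun j => (0 : Fin (n + 1)) < j) Finset.univ
      = Finset.map ⟨Fin.succ, Fin.succ_injective n⟩ Finset.univ from ?_]
  · rw [Finset.prod_map]
    rfl
  · ext j
    simp only [Finset.mem_filter, Finset.mem_univ, true_and, Finset.mem_map,
      Function.Embedding.coeFn_mk]
    constructor
    · intro hj
      have hj0 : j ≠ 0 := by
        intro h0
        rw [h0] at hj
        exact lt_irrefl _ hj
      obtain ⟨k, rfl⟩ := Fin.exists_succ_eq.mpr hj0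
      exact ⟨k, rfl⟩
    · rintro ⟨k, rfl⟩
      exact Fin.succ_pos k

end FinProd

/-- precomposition with an equivalence, as a `MonoidHom` on Pi types -/
def piReindex {ι κ : Type*} (e : ι ≃ κ) (H : Type*) [Group H] : (κ → H) →* (ι → H) where
  toFun F := F ∘ e
  map_one' := rfl
  map_mul' _ _ := rfl

lemma piReindex_injective {ι κ : Type*} (e : ι ≃ κ) (H : Type*) [Group H] :
    Function.Injective (piReindex e H) := by
  intro F F' h
  funext k
  have := congrFun h (e.symm k)
  simpa [piReindex] using this

lemma ker_comp_piReindex {ι κ : Type*} (e : ι ≃ κ) (H : Type*) [Group H]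
    {G' : Type*} [Group G'] (f : G' →* (κ → H)) :
    ((piReindex e H).comp f).ker = f.ker := by
  ext g
  rw [MonoidHom.mem_ker, MonoidHom.mem_ker, MonoidHom.comp_apply]
  constructor
  · intro h
    apply piReindex_injective e H
    rw [h, map_one]
  · intro h
    rw [h, map_one]

section RangeOrb

variable {X : Type u} {G : Subgroup (Equiv.Perm X)} (M : Subgroup ↥G)

lemma card_range_orbIn :
    Nat.card ↥(Set.range fun x : X => orbIn M x) = Nat.card (Blk M) := by
  set F : Blk M → Set X := fun b => {y | blk M y = b} with hF
  have h1 : (fun x : X => orbIn M x) = F ∘ blk M := by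
    funext x
    rw [Function.comp_apply, hF]
    exact orbIn_eq_fiber M x
  have h2 : Set.range (fun x : X => orbIn M x) = Set.range F := by
    rw [h1, Set.range_comp, Set.range_eq_univ.mpr (blk_surjective M), Set.image_univ]
  have hFinj : Function.Injective F := by
    intro b1 b2 h
    obtain ⟨x, hx⟩ := blk_surjective M b1
    have hx1 : x ∈ F b1 := hx
    rw [h] at hx1
    rw [← hx, hx1]
  rw [h2, Nat.card_congr (Equiv.ofInjective F hFinj).symm]

lemma orbIn_ker_rho [M.Normal] (x : X) : orbIn ((rho M).ker) x = orbIn M x := by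
  apply subset_antisymm
  · rintro y ⟨t, ht, rfl⟩
    rw [orbIn_eq_fiber]
    exact (mem_ker_rho_iff M t).mp ht x
  · rintro y ⟨t, ht, rfl⟩
    exact ⟨t, M_le_ker_rho M ht, rfl⟩

lemma card_range_orbIn_comap [M.Normal] (S : Subgroup ↥((rho M).range)) :
    Nat.card ↥(Set.range fun x : X => orbIn (S.comap (rho M).rangeRestrict) x)
      = Nat.card ↥(Set.range fun b : Blk M => orbIn S b) := by
  have h1 : (fun x : X => orbIn (S.comap (rho M).rangeRestrict) x)
      = (fun S' : Set (Blk M) => blk M ⁻¹' S') ∘ (fun b => orbIn S b) ∘ blk M := by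
    funext x
    exact orbIn_comap M S x
  rw [h1, Set.range_comp, Set.range_comp, Set.range_eq_univ.mpr (blk_surjective M),
    Set.image_univ]
  rw [Nat.card_coe_set_eq, Nat.card_coe_set_eq,
    Set.ncard_image_of_injective _ (Set.preimage_injective.mpr (blk_surjective M))]

end RangeOrb

end St6
open Equiv Subgroup St6 in
theorem statement6 {n : ℕ} {X : Type u} (p : Fin n → ℕ)
    (hp : ∀ i, Nat.Prime (p i)) (hinj : Function.Injective p)
    (G : Subgroup (Equiv.Perm X)) (hsolv : IsSolvable ↥G)
    (htrans : ∀ x y : X, ∃ g ∈ G, g x = y)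
    (hcard : Nat.card X = Finset.univ.prod p) :
    ∃ (τ : Equiv.Perm (Fin n)) (K : Fin (n + 1) → Subgroup ↥G) (T : Fin n → Subgroup ↥G),
      K 0 = ⊥ ∧ K (Fin.last n) = ⊤ ∧
      (∀ i, (K i).Normal) ∧ (∀ i, (T i).Normal) ∧
      (∀ i : Fin n, K i.castSucc ≤ T i ∧ T i ≤ K i.succ) ∧
      ∀ i : Fin n,
        (∃ φ : ↥(K i.succ) →*
            (Fin (Finset.prod (Finset.filter (fun j => i < j) Finset.univ)
                (fun j => p (τ j))) → Hol (p (τ i))),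
          φ.ker = (K i.castSucc).subgroupOf (K i.succ)) ∧
        (p (τ i) ∣ (K i.castSucc).relIndex (K i.succ)) ∧
        (∃ k : ℕ, (K i.castSucc).relIndex (T i) = p (τ i) ^ k) ∧
        (¬ p (τ i) ∣ (T i).relIndex (K i.succ)) ∧
        (∀ g : ↥G, g ∈ K i.succ ↔
          ∀ x : X, ⇑(g : Equiv.Perm X) '' orbIn (T i) x = orbIn (T i) x) ∧
        (∀ g : ↥G, ∀ x : X, ∃ x' : X,
          ⇑(g : Equiv.Perm X) '' orbIn (K i.succ) x = orbIn (K i.succ) x') ∧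
        Nat.card ↥(Set.range fun x : X => orbIn (K i.succ) x) =
          Finset.prod (Finset.filter (fun j => i < j) Finset.univ) (fun j => p (τ j)) := by
  induction n generalizing X with
  | zero =>
    have hcard1 : Nat.card X = 1 := by simpa using hcard
    obtain ⟨hXsub, hXne⟩ := Nat.card_eq_one_iff_unique.mp hcard1
    have hGtriv : ∀ g : ↥G, g = 1 := by
      intro g
      apply Subtype.ext
      apply Equiv.ext
      intro x
      exact Subsingleton.elim _ _
    have hbotTop : (⊥ : Subgroup ↥G) = ⊤ := by
      ext g
      simp only [Subgroup.mem_bot, Subgroup.mem_top, iff_true]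
      exact hGtriv g
    exact ⟨Equiv.refl _, fun _ => ⊥, fun i => i.elim0, rfl, hbotTop,
      fun _ => inferInstance, fun i => i.elim0, fun i => i.elim0, fun i => i.elim0⟩
  | succ n IH =>
    classical
    -- basic finiteness
    have hprodpos : (0 : ℕ) < ∏ i, p i := Finset.prod_pos (fun i _ => (hp i).pos)
    haveI hXfin : Finite X := Nat.finite_of_card_ne_zero (by rw [hcard]; exact hprodpos.ne')
    have hcard2 : 2 ≤ Nat.card X := by
      rw [hcard]
      calc 2 ≤ p 0 := (hp 0).two_le
        _ ≤ ∏ i, p i := Finset.single_le_prod' (fun i _ => (hp i).one_le) (Finset.mem_univ 0)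
    haveI hXnt : Nontrivial X := by
      letI := Fintype.ofFinite X
      rw [Nat.card_eq_fintype_card] at hcard2
      exact Fintype.one_lt_card_iff_nontrivial.mp (by omega)
    haveI hGfin : Finite ↥G := Subtype.finite
    haveI : Group.IsSolvable ↥G := hsolv
    haveI hGnt : Nontrivial ↥G := by
      obtain ⟨x, y, hxy⟩ := exists_pair_ne X
      obtain ⟨g, hg, hgxy⟩ := htrans x y
      refine ⟨⟨g, hg⟩, 1, fun h => hxy ?_⟩
      have hg1 : g = 1 := by simpa using congrArg Subtype.val h
      rw [← hgxy, hg1]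
      rfl
    -- normal abelian subgroup of exponent q
    obtain ⟨Ab, hAnorm, hAne, hAcomm⟩ := exists_normal_abelian ↥G
    obtain ⟨am, hamne⟩ := Subgroup.ne_bot_iff_exists_ne_one.mp hAne
    have haA : (am : ↥G) ∈ Ab := am.2
    have hane : (am : ↥G) ≠ 1 := fun h => hamne (Subtype.ext h)
    set q := (orderOf (am : ↥G)).minFac with hqdef
    have hordne : orderOf (am : ↥G) ≠ 1 := fun h => hane (orderOf_eq_one_iff.mp h)
    have hq : q.Prime := Nat.minFac_prime hordne
    set M : Subgroup ↥G :=
      { carrier := {x : ↥G | x ∈ Ab ∧ x ^ q = 1}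
        one_mem' := ⟨Ab.one_mem, one_pow q⟩
        mul_mem' := by
          intro x y hx hy
          refine ⟨Ab.mul_mem hx.1 hy.1, ?_⟩
          rw [Commute.mul_pow (hAcomm x hx.1 y hy.1), hx.2, hy.2, one_mul]
        inv_mem' := by
          intro x hx
          exact ⟨Ab.inv_mem hx.1, by rw [inv_pow, hx.2, inv_one]⟩ } with hMdef
    have hMmem : ∀ x : ↥G, x ∈ M ↔ x ∈ Ab ∧ x ^ q = 1 := fun x => Iff.rfl
    haveI hMnorm : M.Normal := by
      constructor
      intro x hx g
      refine ⟨hAnorm.conj_mem x hx.1 g, ?_⟩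
      rw [conj_pow, hx.2, mul_one, mul_inv_cancel]
    have hMexp : ∀ m ∈ M, m ^ q = 1 := fun m hm => hm.2
    have hMcomm : ∀ u ∈ M, ∀ v ∈ M, u * v = v * u := fun u hu v hv => hAcomm u hu.1 v hv.1
    have hMne : M ≠ ⊥ := by
      have hordpos : 0 < orderOf (am : ↥G) := orderOf_pos _
      have hqdvd : q ∣ orderOf (am : ↥G) := Nat.minFac_dvd _
      have hbq : ((am : ↥G) ^ (orderOf (am : ↥G) / q)) ^ q = 1 := by
        rw [← pow_mul, Nat.div_mul_cancel hqdvd, pow_orderOf_eq_one]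
      have hbne : (am : ↥G) ^ (orderOf (am : ↥G) / q) ≠ 1 := by
        intro h
        have hdvd := orderOf_dvd_of_pow_eq_one h
        have hpos : 0 < orderOf (am : ↥G) / q :=
          Nat.div_pos (Nat.le_of_dvd hordpos hqdvd) hq.pos
        have hlt : orderOf (am : ↥G) / q < orderOf (am : ↥G) :=
          Nat.div_lt_self hordpos hq.one_lt
        have := Nat.le_of_dvd hpos hdvd
        omega
      rw [Subgroup.ne_bot_iff_exists_ne_one]
      exact ⟨⟨(am : ↥G) ^ (orderOf (am : ↥G) / q), ⟨pow_mem haA _, hbq⟩⟩,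
        fun h => hbne (by simpa using congrArg Subtype.val h)⟩
    -- orbits have size q
    obtain ⟨kM, hkM⟩ := card_M_primepow M hq hMexp
    have hkM0 : kM ≠ 0 := by
      intro h
      rw [h, pow_zero] at hkM
      exact hMne (Subgroup.card_eq_one.mp hkM)
    obtain ⟨x₀⟩ : Nonempty X := inferInstance
    have hconst : ∀ x : X, Nat.card (orbIn M x) = Nat.card (orbIn M x₀) :=
      fun x => orb_card_const M htrans x x₀
    have hcdvdM : Nat.card (orbIn M x₀) ∣ Nat.card ↥M := card_orbIn_dvd M x₀
    obtain ⟨e, he, hce⟩ := (Nat.dvd_prime_pow hq).mp (hkM ▸ hcdvdM)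
    have hcne1 : Nat.card (orbIn M x₀) ≠ 1 := by
      obtain ⟨x, hx⟩ := orb_card_ne_one M hMne
      exact fun h => hx ((hconst x).trans h)
    have hXeq : Nat.card X = Nat.card (Blk M) * Nat.card (orbIn M x₀) :=
      card_X_eq_card_blk_mul M hconst
    have hcdvdX : Nat.card (orbIn M x₀) ∣ Nat.card X := hXeq ▸ dvd_mul_left _ _
    have he1 : e = 1 := by
      by_contra hne
      have he2 : 2 ≤ e := by
        rcases Nat.eq_zero_or_pos e with h0 | h1
        · rw [h0, pow_zero] at hce; exact absurd hce hcne1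
        · omega
      have hq2 : q ^ 2 ∣ Nat.card X := dvd_trans (hce ▸ pow_dvd_pow q he2) hcdvdX
      rw [hcard] at hq2
      exact sq_not_dvd_prod hp hinj hq hq2
    have hcq : Nat.card (orbIn M x₀) = q := by rw [hce, he1, pow_one]
    obtain ⟨j₀, hj₀⟩ := prime_eq_of_dvd_prod hp hq (hcard ▸ (hcq ▸ hcdvdX))
    have horb : ∀ x : X, Nat.card (orbIn M x) = q := fun x => (hconst x).trans hcq
    -- key step
    obtain ⟨T1, hT1norm, hMT1, hT1K1, horbT1, ⟨Φ, hkerΦ⟩, hcardT1, hindT1⟩ :=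
      key_step M hq hMexp hMcomm horb
    -- quotient setup
    have hπsurj : Function.Surjective (rho M).rangeRestrict :=
      (rho M).rangeRestrict_surjective
    haveI : Group.IsSolvable ↥((rho M).range) := solvable_of_surjective hπsurj
    have htrans' : ∀ b b' : Blk M, ∃ g' ∈ (rho M).range, g' b = b' := by
      intro b b'
      obtain ⟨x, rfl⟩ := blk_surjective M b
      obtain ⟨y, rfl⟩ := blk_surjective M b'
      obtain ⟨g, hg, hgxy⟩ := htrans x y
      refine ⟨rho M ⟨g, hg⟩, ⟨⟨g, hg⟩, rfl⟩, ?_⟩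
      rw [rho_blk]
      exact congrArg (blk M) hgxy
    set p' : Fin n → ℕ := fun k => p (j₀.succAbove k) with hp'def
    have hp' : ∀ k, (p' k).Prime := fun k => hp _
    have hinj' : Function.Injective p' := fun k l h =>
      Fin.succAbove_right_injective (hinj h)
    have hcard' : Nat.card (Blk M) = Finset.univ.prod p' := by
      have h2 : (∏ i, p i) = p j₀ * ∏ k, p' k := Fin.prod_univ_succAbove p j₀
      rw [hj₀] at h2
      have h3 : Nat.card X = q * Nat.card (Blk M) := by rw [hXeq, hcq, mul_comm]
      rw [hcard] at h3
      have h4 : q * Nat.card (Blk M) = q * ∏ k, p' k := by rw [← h3]; exact h2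
      exact Nat.eq_of_mul_eq_mul_left hq.pos h4
    obtain ⟨τ', K', T', hK0', hKlast', hKnorm', hTnorm', hchain', hmain'⟩ :=
      IH p' hp' hinj' (rho M).range (show Group.IsSolvable _ from inferInstance) htrans' hcard'
    -- the permutation τ
    have hFinj : Function.Injective
        (Fin.cases j₀ (fun i => j₀.succAbove (τ' i)) : Fin (n+1) → Fin (n+1)) := by
      intro i1 i2 h
      induction i1 using Fin.cases with
      | zero =>
        induction i2 using Fin.cases with
        | zero => rfl
        | succ k =>
          simp only [Fin.cases_zero, Fin.cases_succ] at h
          exact absurd h.symm (Fin.succAbove_ne j₀ (τ' k))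
      | succ k1 =>
        induction i2 using Fin.cases with
        | zero =>
          simp only [Fin.cases_zero, Fin.cases_succ] at h
          exact absurd h (Fin.succAbove_ne j₀ (τ' k1))
        | succ k2 =>
          simp only [Fin.cases_succ] at h
          exact congrArg Fin.succ (τ'.injective (Fin.succAbove_right_injective h))
    set τ : Equiv.Perm (Fin (n+1)) :=
      Equiv.ofBijective _ (Finite.injective_iff_bijective.mp hFinj) with hτdef
    have hτ0 : τ 0 = j₀ := by simp [hτdef]
    have hτs : ∀ k : Fin n, τ k.succ = j₀.succAbove (τ' k) := by
      intro k
      simp [hτdef]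
    -- the chains
    set K : Fin (n+2) → Subgroup ↥G :=
      fun i => Fin.cases ⊥ (fun i' => (K' i').comap (rho M).rangeRestrict) i with hKdef
    set T : Fin (n+1) → Subgroup ↥G :=
      fun i => Fin.cases T1 (fun i' => (T' i').comap (rho M).rangeRestrict) i with hTdef
    have hK0 : K 0 = ⊥ := by simp [hKdef]
    have hKs : ∀ i' : Fin (n+1), K i'.succ = (K' i').comap (rho M).rangeRestrict := by
      intro i'
      simp [hKdef]
    have hT0 : T 0 = T1 := by simp [hTdef]
    have hTs : ∀ i' : Fin n, T i'.succ = (T' i').comap (rho M).rangeRestrict := by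
      intro i'
      simp [hTdef]
    have hcomapbot : (⊥ : Subgroup ↥((rho M).range)).comap (rho M).rangeRestrict
        = (rho M).ker := by
      rw [show (⊥ : Subgroup ↥((rho M).range)).comap (rho M).rangeRestrict
        = ((rho M).rangeRestrict).ker from rfl, MonoidHom.ker_rangeRestrict]
    have hKsucc0 : K (0 : Fin (n+1)).succ = (rho M).ker := by
      rw [hKs 0, hK0', hcomapbot]
    have hcoe : ∀ g : ↥G, (((rho M).rangeRestrict g : ↥((rho M).range)) : Perm (Blk M))
        = rho M g := fun g => rfl
    refine ⟨τ, K, T, hK0, ?_, ?_, ?_, ?_, ?_⟩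
    · rw [show Fin.last (n+1) = (Fin.last n).succ from (Fin.succ_last n).symm, hKs, hKlast',
        Subgroup.comap_top]
    · intro i
      induction i using Fin.cases with
      | zero => rw [hK0]; infer_instance
      | succ i' =>
        rw [hKs]
        exact Subgroup.Normal.comap (hKnorm' i') _
    · intro i
      induction i using Fin.cases with
      | zero => rw [hT0]; exact hT1norm
      | succ i' =>
        rw [hTs]
        exact Subgroup.Normal.comap (hTnorm' i') _
    · intro i
      induction i using Fin.cases with
      | zero =>
        constructor
        · rw [show (0 : Fin (n+1)).castSucc = (0 : Fin (n+2)) from rfl, hK0]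
          exact bot_le
        · rw [hT0, hKsucc0]
          exact hT1K1
      | succ i' =>
        have hcs : (i'.succ).castSucc = (i'.castSucc).succ := (Fin.succ_castSucc i').symm
        constructor
        · rw [hcs, hKs, hTs]
          exact Subgroup.comap_mono (hchain' i').1
        · rw [hKs, hTs]
          exact Subgroup.comap_mono (hchain' i').2
    · intro i
      induction i using Fin.cases with
      | zero =>
        have hEq0P : p (τ 0) = q := by rw [hτ0, hj₀]
        have hEq0N : (∏ j ∈ Finset.filter (fun j => (0 : Fin (n+1)) < j) Finset.univ,
            p (τ j)) = Nat.card (Blk M) := by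
          rw [prod_filter_zero (fun j => p (τ j))]
          rw [Finset.prod_congr rfl (fun k _ => by simp only [hτs k, hp'def] :
            ∀ k ∈ Finset.univ, p (τ k.succ) = p' (τ' k))]
          rw [Equiv.prod_comp τ' p']
          exact hcard'.symm
        refine ⟨?_, ?_, ?_, ?_, ?_, ?_, ?_⟩
        · rw [hKsucc0, hEq0P, hEq0N,
            show (0 : Fin (n+1)).castSucc = (0 : Fin (n+2)) from rfl, hK0,
            Subgroup.bot_subgroupOf]
          haveI : Finite (Blk M) := Quotient.finite _
          exact ⟨(piReindex ((Finite.equivFin (Blk M)).symm) (Hol q)).comp Φ,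
            by rw [ker_comp_piReindex, hkerΦ]⟩
        · rw [show (0 : Fin (n+1)).castSucc = (0 : Fin (n+2)) from rfl, hK0, hKsucc0,
            Subgroup.relIndex_bot_left, hEq0P]
          have h1 : Nat.card ↥M ∣ Nat.card ↥(rho M).ker :=
            Subgroup.card_dvd_of_le (le_trans hMT1 hT1K1)
          have h2 : q ∣ Nat.card ↥M := by
            rw [hkM]
            exact dvd_pow_self q hkM0
          exact h2.trans h1
        · rw [show (0 : Fin (n+1)).castSucc = (0 : Fin (n+2)) from rfl, hK0, hT0,
            Subgroup.relIndex_bot_left, hEq0P]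
          exact hcardT1
        · rw [hT0, hKsucc0, hEq0P]
          exact hindT1
        · intro g
          rw [hKsucc0, hT0]
          simp only [horbT1]
          exact mem_ker_rho_iff_image M g
        · intro g x
          rw [hKsucc0]
          exact ⟨(g : Perm X) x, orbIn_image _ g x⟩
        · rw [hKsucc0, hEq0N]
          have h1 : (fun x : X => orbIn ((rho M).ker) x) = fun x : X => orbIn M x := by
            funext x
            exact orbIn_ker_rho M x
          rw [h1]
          exact card_range_orbIn M
      | succ i' =>
        obtain ⟨⟨φ', hφ'⟩, hdvd', hpow', hnd', hmem', hex', hcardr'⟩ := hmain' i'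
        have hcs : (i'.succ).castSucc = (i'.castSucc).succ := (Fin.succ_castSucc i').symm
        have hEqP : p (τ i'.succ) = p' (τ' i') := by simp only [hτs i', hp'def]
        have hEqN : (∏ j ∈ Finset.filter (fun j => i'.succ < j) Finset.univ, p (τ j))
            = ∏ j ∈ Finset.filter (fun j => i' < j) Finset.univ, p' (τ' j) := by
          rw [prod_filter_succ (fun j => p (τ j)) i']
          exact Finset.prod_congr rfl (fun k _ => by simp only [hτs k, hp'def])
        refine ⟨?_, ?_, ?_, ?_, ?_, ?_, ?_⟩
        · rw [hEqP, hEqN, hKs i'.succ, hcs, hKs i'.castSucc]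
          refine ⟨φ'.comp (comapHom (rho M).rangeRestrict (K' i'.succ)), ?_⟩
          rw [subgroupOf_comap (rho M).rangeRestrict (K' i'.castSucc) (K' i'.succ), ← hφ']
          ext g
          rw [MonoidHom.mem_ker, Subgroup.mem_comap, MonoidHom.mem_ker, MonoidHom.comp_apply]
        · rw [hcs, hKs, hKs, relindex_comap_surj hπsurj, hEqP]
          exact hdvd'
        · rw [hcs, hKs, hTs, relindex_comap_surj hπsurj, hEqP]
          exact hpow'
        · rw [hTs, hKs, relindex_comap_surj hπsurj, hEqP]
          exact hnd'
        · intro g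
          rw [hKs, hTs, Subgroup.mem_comap, hmem' ((rho M).rangeRestrict g)]
          constructor
          · intro h x
            rw [orbIn_comap M (T' i') x, image_preimage_blk]
            have h2 := h (blk M x)
            rw [hcoe] at h2
            rw [h2]
          · intro h b
            obtain ⟨x, rfl⟩ := blk_surjective M b
            have h2 := h x
            rw [orbIn_comap M (T' i') x, image_preimage_blk] at h2
            rw [hcoe]
            exact Set.preimage_injective.mpr (blk_surjective M) h2
        · intro g x
          rw [hKs]
          haveI : ((K' i'.succ).comap (rho M).rangeRestrict).Normal :=
            Subgroup.Normal.comap (hKnorm' i'.succ) _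
          exact ⟨(g : Perm X) x, orbIn_image _ g x⟩
        · rw [hKs i'.succ, card_range_orbIn_comap M (K' i'.succ), hcardr']
          exact hEqN.symm
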